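/- Let A be a real m×n matrix and let Q be a real m×ℓ matrix with orthonormal columns (QᵀQ = I) such that the column space of Q is contained in the column space of A. Then rank(Qᵀ A) = ℓ; equivalently, all ℓ singular values of Qᵀ A are positive. -/

import Mathlib

open Matrix

/-- If Q has orthonormal columns and Col(Q) ⊆ Col(A), then QᵀA has full row rank ℓ. -/
theorem rank_transpose_mul_of_colspace_le
    {m n ℓ : ℕ} (A : Matrix (Fin m) (Fin n) ℝ) (Q : Matrix (Fin m) (Fin ℓ) ℝ)
    (hQ : Qᵀ * Q = 1)
    (hcol : LinearMap.range Q.mulVecLin ≤ LinearMap.range A.mulVecLin) :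
    (Qᵀ * A).rank = ℓ := by
  have hsurj : Function.Surjective (Qᵀ * A).mulVecLin := by
    intro y
    obtain ⟨x, hx⟩ := hcol ⟨y, rfl⟩
    refine ⟨x, ?_⟩
    have h1 : (Qᵀ * A).mulVecLin x = Qᵀ *ᵥ (A *ᵥ x) := by
      rw [Matrix.mulVecLin_apply, Matrix.mulVec_mulVec]
    have h2 : A.mulVecLin x = A *ᵥ x := rfl
    rw [h1, ← h2, hx]
    show Qᵀ *ᵥ (Q *ᵥ y) = y
    rw [Matrix.mulVec_mulVec, hQ, Matrix.one_mulVec]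
  rw [Matrix.rank, LinearMap.range_eq_top.mpr hsurj]
  simp
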